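/- arXiv:2408.08540 — 2 statements merged into one kernel-verified Lean document; each statement's English description precedes it below -/
import Mathlib

section
/- Let N ≥ 1, let Q ∈ ℂ^{N×N} be unitary with columns ξ₁, …, ξ_N, let Λ = diag(λ₁, …, λ_N), set A = Q Λ Q*, and let B, H ∈ ℂ^{N×N}. Let V ⊆ {1, …, N}, let t ∈ ℂ^N be supported in V, and set φ = Q t. Suppose additionally that φ is an eigenvector of the smoothing error propagation matrix: (I − B A) φ = σ φ for some σ ∈ ℂ. Then for every integer M ≥ 0, ‖(I − H A)(I − B A)^M φ‖₂ ≤ |σ|^M (∑_{i∈V} ‖l_i‖₂²)^{1/2} ‖φ‖₂, where l_i = ξ_i − H(λ_i ξ_i). -/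
open Matrix

/-- The Euclidean (ℓ²) norm on ℂ^N. -/
noncomputable def l2norm {N : ℕ} (x : Fin N → ℂ) : ℝ :=
  Real.sqrt (∑ i, ‖x i‖ ^ 2)

lemma l2norm_eq_norm {N : ℕ} (x : Fin N → ℂ) :
    l2norm x = ‖(WithLp.equiv 2 (Fin N → ℂ)).symm x‖ := by
  rw [EuclideanSpace.norm_eq]; rfl

lemma l2norm_nonneg {N : ℕ} (x : Fin N → ℂ) : 0 ≤ l2norm x :=
  Real.sqrt_nonneg _

lemma l2norm_smul {N : ℕ} (c : ℂ) (x : Fin N → ℂ) :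
    l2norm (c • x) = ‖c‖ * l2norm x := by
  rw [l2norm_eq_norm, l2norm_eq_norm, ← norm_smul]
  rfl

lemma l2norm_mulVec_eq {N : ℕ} (Q : Matrix (Fin N) (Fin N) ℂ)
    (hQ : Q ∈ Matrix.unitaryGroup (Fin N) ℂ) (t : Fin N → ℂ) :
    l2norm (Q.mulVec t) = l2norm t := by
  have hQQ : Qᴴ * Q = 1 := by
    simpa [Matrix.star_eq_conjTranspose] using Matrix.mem_unitaryGroup_iff'.mp hQ
  have key : star (Q.mulVec t) ⬝ᵥ Q.mulVec t = star t ⬝ᵥ t := by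
    rw [Matrix.star_mulVec, Matrix.dotProduct_mulVec, Matrix.vecMul_vecMul,
      hQQ, Matrix.vecMul_one]
  have h1 : ∑ i, ‖Q.mulVec t i‖ ^ 2 = ∑ i, ‖t i‖ ^ 2 := by
    have hre : ∀ (x : Fin N → ℂ), (star x ⬝ᵥ x).re = ∑ i, ‖x i‖ ^ 2 := by
      intro x
      rw [dotProduct, Complex.re_sum]
      refine Finset.sum_congr rfl fun i _ => ?_
      rw [Pi.star_apply, Complex.star_def, ← Complex.normSq_eq_conj_mul_self,
        Complex.ofReal_re, Complex.sq_norm]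
    rw [← hre, ← hre, key]
  unfold l2norm
  rw [h1]

/-- **Per-frequency contraction of one hybrid step.**
Let `A = Q Λ Q*` with `Q` unitary (columns `ξ_i`), `Λ = diag(λ_i)`, and
`l_i = ξ_i − H (λ_i ξ_i)`. If `φ = Q t` with `t` supported in `V` and `φ` is an eigenvector
of the smoothing error propagation matrix, `(I − B A) φ = σ φ`, then for every `M ≥ 0`:
`‖(I − H A)(I − B A)^M φ‖₂ ≤ |σ|^M (∑_{i ∈ V} ‖l_i‖₂²)^{1/2} ‖φ‖₂`. -/
theorem hybrid_step_per_frequency_estimate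
    {N : ℕ} (hN : 1 ≤ N)
    (Q : Matrix (Fin N) (Fin N) ℂ) (hQ : Q ∈ Matrix.unitaryGroup (Fin N) ℂ)
    (lam : Fin N → ℂ)
    (A B H : Matrix (Fin N) (Fin N) ℂ)
    (hA : A = Q * Matrix.diagonal lam * Qᴴ)
    (l : Fin N → Fin N → ℂ)
    (hl : ∀ i : Fin N, l i = (fun k => Q k i) - H.mulVec (lam i • fun k => Q k i))
    (V : Finset (Fin N)) (t : Fin N → ℂ) (ht : ∀ i ∉ V, t i = 0)
    (φ : Fin N → ℂ) (hφ : φ = Q.mulVec t)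
    (σ : ℂ) (hσ : (1 - B * A).mulVec φ = σ • φ)
    (M : ℕ) :
    l2norm (((1 - H * A) * (1 - B * A) ^ M).mulVec φ) ≤
      ‖σ‖ ^ M * Real.sqrt (∑ i ∈ V, (l2norm (l i)) ^ 2) * l2norm φ := by
  -- Step 1: (1 - B A)^M φ = σ^M φ
  have hQQ : Qᴴ * Q = 1 := by
    simpa [Matrix.star_eq_conjTranspose] using Matrix.mem_unitaryGroup_iff'.mp hQ
  have hpow : ∀ m : ℕ, ((1 - B * A) ^ m).mulVec φ = σ ^ m • φ := by
    intro m
    induction m with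
    | zero => simp
    | succ m ih =>
      rw [pow_succ, ← Matrix.mulVec_mulVec, hσ, Matrix.mulVec_smul, ih,
        smul_smul, ← pow_succ']
  have hsplit : ((1 - H * A) * (1 - B * A) ^ M).mulVec φ
      = σ ^ M • ((1 - H * A).mulVec φ) := by
    rw [← Matrix.mulVec_mulVec, hpow, Matrix.mulVec_smul]
  -- Step 2: (1 - H A) φ = ∑ i ∈ V, t i • l i
  have hAφ : A.mulVec φ = Q.mulVec (fun i => lam i * t i) := by
    rw [hA, hφ, Matrix.mulVec_mulVec, mul_assoc, mul_assoc, hQQ, mul_one]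
    ext k
    simp [Matrix.mulVec, dotProduct, Matrix.mul_diagonal, mul_assoc]
  have hexp : ∀ (s : Fin N → ℂ), Q.mulVec s = ∑ i, s i • (fun k => Q k i) := by
    intro s
    ext k
    simp [Matrix.mulVec, dotProduct, mul_comm]
  have hstep2 : (1 - H * A).mulVec φ = ∑ i ∈ V, t i • l i := by
    have hVsum : ∀ (f : Fin N → Fin N → ℂ),
        (∑ i, t i • f i) = ∑ i ∈ V, t i • f i := by
      intro f
      rw [← Finset.sum_subset (Finset.subset_univ V)]
      intro i _ hi
      rw [ht i hi, zero_smul]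
    rw [Matrix.sub_mulVec, Matrix.one_mulVec, ← Matrix.mulVec_mulVec, hAφ]
    rw [hφ, hexp t, hexp (fun i => lam i * t i)]
    have : H.mulVec (∑ i, (lam i * t i) • fun k => Q k i)
        = ∑ i, t i • H.mulVec (lam i • fun k => Q k i) := by
      rw [show (H.mulVec (∑ i, (lam i * t i) • fun k => Q k i))
          = H.mulVecLin (∑ i, (lam i * t i) • fun k => Q k i) from rfl, map_sum]
      refine Finset.sum_congr rfl fun i _ => ?_
      rw [mul_comm, mul_smul, _root_.map_smul]
      rfl
    rw [this, ← Finset.sum_sub_distrib]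
    have : ∀ i, t i • (fun k => Q k i) - t i • H.mulVec (lam i • fun k => Q k i)
        = t i • l i := by
      intro i; rw [hl i, smul_sub]
    simp_rw [this]
    exact hVsum l
  -- Step 3: Cauchy–Schwarz bound
  have htnorm : l2norm φ = l2norm t := by rw [hφ, l2norm_mulVec_eq Q hQ]
  have hCS : l2norm (∑ i ∈ V, t i • l i)
      ≤ Real.sqrt (∑ i ∈ V, (l2norm (l i)) ^ 2) * l2norm t := by
    calc l2norm (∑ i ∈ V, t i • l i)
        ≤ ∑ i ∈ V, ‖t i‖ * l2norm (l i) := by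
          rw [l2norm_eq_norm, WithLp.equiv_symm_apply, WithLp.toLp_sum]
          refine le_trans (norm_sum_le _ _) ?_
          apply Finset.sum_le_sum
          intro i _
          rw [WithLp.toLp_smul, norm_smul, l2norm_eq_norm]
          exact le_rfl
      _ ≤ Real.sqrt (∑ i ∈ V, ‖t i‖ ^ 2) * Real.sqrt (∑ i ∈ V, (l2norm (l i)) ^ 2) := by
          have h2 := Finset.sum_mul_sq_le_sq_mul_sq V (fun i => ‖t i‖) (fun i => l2norm (l i))
          have hnn : (0:ℝ) ≤ ∑ i ∈ V, ‖t i‖ * l2norm (l i) :=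
            Finset.sum_nonneg fun i _ => mul_nonneg (norm_nonneg _) (l2norm_nonneg _)
          have := Real.sqrt_le_sqrt h2
          rwa [Real.sqrt_sq hnn, Real.sqrt_mul (Finset.sum_nonneg fun i _ => sq_nonneg _)]
            at this
      _ ≤ Real.sqrt (∑ i ∈ V, (l2norm (l i)) ^ 2) * l2norm t := by
          rw [mul_comm]
          apply mul_le_mul_of_nonneg_left _ (Real.sqrt_nonneg _)
          unfold l2norm
          apply Real.sqrt_le_sqrt
          exact Finset.sum_le_sum_of_subset_of_nonneg (Finset.subset_univ V)
            (fun i _ _ => sq_nonneg _)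
  rw [hsplit, hstep2, l2norm_smul, norm_pow, htnorm, mul_assoc]
  exact mul_le_mul_of_nonneg_left hCS (pow_nonneg (norm_nonneg _) _)
end

section
/- Let N ≥ 1. Suppose: (i) {ψ_θ}_{θ∈Θ} is an orthonormal basis of ℂ^N indexed by a finite set Θ = Θ_B ⊔ Θ_H (disjoint union); (ii) A = Q Λ Q* where Q ∈ ℂ^{N×N} is unitary with columns ξ₁,…,ξ_N and Λ = diag(λ₁,…,λ_N); (iii) B ∈ ℂ^{N×N} satisfies (I − B A) ψ_θ = σ_θ ψ_θ for every θ ∈ Θ, with |σ_θ| ≤ μ_B for θ ∈ Θ_B and |σ_θ| ≤ 1 + ε_B for θ ∈ Θ_H, where μ_B ∈ (0,1) and ε_B ≥ 0; (iv) for each θ ∈ Θ there is a set V_θ ⊆ {1,…,N} and a vector t_θ ∈ ℂ^N supported in V_θ with ψ_θ = Q t_θ; (v) H ∈ ℂ^{N×N}, and with l_i = ξ_i − H(λ_i ξ_i), the bounds ∑_{i∈V_θ} ‖l_i‖₂² ≤ C hold for all θ ∈ Θ_B and ∑_{i∈V_θ} ‖l_i‖₂² ≤ μ_H hold for all θ ∈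 Θ_H, with C ≥ 0 and μ_H ∈ (0,1); (vi) for a fixed integer M ≥ 0, the vectors {(I − H A)(I − B A)^M ψ_θ}_{θ∈Θ_B} are pairwise orthogonal, and the vectors {(I − H A)(I − B A)^M ψ_θ}_{θ∈Θ_H} are pairwise orthogonal. Then the hybrid iterative method satisfies, for every e ∈ ℂ^N, ‖(I − H A)(I − B A)^M e‖₂ ≤ η ‖e‖₂, where η = sqrt( max{ 2 μ_B^{2M} C, 2 (1 + ε_B)^{2M} μ_H } ). -/
open Matrix

noncomputable def toE {N : ℕ} (x : Fin N → ℂ) : EuclideanSpace ℂ (Fin N) :=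
  (WithLp.equiv 2 (Fin N → ℂ)).symm x

lemma toE_norm {N : ℕ} (x : Fin N → ℂ) : ‖toE x‖ = l2norm x := by
  simp [toE, EuclideanSpace.norm_eq, l2norm]

lemma toE_inner {N : ℕ} (x y : Fin N → ℂ) :
    (inner ℂ (toE x) (toE y) : ℂ) = star x ⬝ᵥ y := by
  simp [toE, PiLp.inner_apply, RCLike.inner_apply, dotProduct, mul_comm]

lemma norm_sq_sum_orth {ι : Type*} {F : Type*} [NormedAddCommGroup F]
    [InnerProductSpace ℂ F] (s : Finset ι) (v : ι → F)
    (h : ∀ a ∈ s, ∀ b ∈ s, a ≠ b → (inner ℂ (v a) (v b) : ℂ) = 0) :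
    ‖∑ a ∈ s, v a‖ ^ 2 = ∑ a ∈ s, ‖v a‖ ^ 2 := by
  classical
  rw [← inner_self_eq_norm_sq (𝕜 := ℂ) (∑ a ∈ s, v a), sum_inner, map_sum]
  refine Finset.sum_congr rfl fun a ha => ?_
  rw [inner_sum, Finset.sum_eq_single a
      (fun b hb hne => h a ha b hb (fun e => hne e.symm))
      (fun h' => absurd ha h'),
    inner_self_eq_norm_sq]

/-- **Main convergence theorem for the hybrid iterative method (Theorem 1).**
Under the smoothing assumption on `B` (its error propagation matrix has the orthonormal
basis `{ψ_θ}` as eigenvectors, with eigenvalue bounds `μ_B` on `Θ_B` and `1 + ε_B` on `Θ_H`),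
the approximation assumption on `H` (with `l_i = ξ_i − H(λ_i ξ_i)`, the sums
`∑_{i ∈ V_θ} ‖l_i‖₂²` are bounded by `C` on `Θ_B` and by `μ_H` on `Θ_H`, where
`ψ_θ = Q t_θ` with `t_θ` supported in `V_θ`), and the orthogonality condition on the images
of `ψ_θ` under `E = (I − H A)(I − B A)^M`, the hybrid method contracts every error `e`:
`‖E e‖₂ ≤ η ‖e‖₂` with `η = √(max{2 μ_B^{2M} C, 2 (1 + ε_B)^{2M} μ_H})`. -/
theorem hybrid_method_main_convergence
    {N : ℕ} (hN : 1 ≤ N)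
    {Θ : Type*} [Fintype Θ] [DecidableEq Θ]
    (hcard : Fintype.card Θ = N)
    (ΘB ΘH : Finset Θ) (hdisj : Disjoint ΘB ΘH) (hcover : ΘB ∪ ΘH = Finset.univ)
    (ψ : Θ → Fin N → ℂ)
    (h_on : ∀ a b : Θ, star (ψ a) ⬝ᵥ ψ b = if a = b then 1 else 0)
    (Q : Matrix (Fin N) (Fin N) ℂ) (hQ : Q ∈ Matrix.unitaryGroup (Fin N) ℂ)
    (lam : Fin N → ℂ)
    (A B H : Matrix (Fin N) (Fin N) ℂ)
    (hA : A = Q * Matrix.diagonal lam * Qᴴ)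
    (σ : Θ → ℂ)
    (hB : ∀ θ : Θ, (1 - B * A).mulVec (ψ θ) = σ θ • ψ θ)
    (μB εB : ℝ) (hμB : 0 < μB) (hμB1 : μB < 1) (hεB : 0 ≤ εB)
    (hσB : ∀ θ ∈ ΘB, ‖σ θ‖ ≤ μB)
    (hσH : ∀ θ ∈ ΘH, ‖σ θ‖ ≤ 1 + εB)
    (V : Θ → Finset (Fin N)) (t : Θ → Fin N → ℂ)
    (ht : ∀ θ : Θ, ∀ i ∉ V θ, t θ i = 0)
    (hψQ : ∀ θ : Θ, ψ θ = Q.mulVec (t θ))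
    (l : Fin N → Fin N → ℂ)
    (hl : ∀ i : Fin N, l i = (fun k => Q k i) - H.mulVec (lam i • fun k => Q k i))
    (C μH : ℝ) (hC : 0 ≤ C) (hμH : 0 < μH) (hμH1 : μH < 1)
    (hlB : ∀ θ ∈ ΘB, ∑ i ∈ V θ, (l2norm (l i)) ^ 2 ≤ C)
    (hlH : ∀ θ ∈ ΘH, ∑ i ∈ V θ, (l2norm (l i)) ^ 2 ≤ μH)
    (M : ℕ)
    (horthB : ∀ θ ∈ ΘB, ∀ θ' ∈ ΘB, θ ≠ θ' →
      star (((1 - H * A) * (1 - B * A) ^ M).mulVec (ψ θ)) ⬝ᵥ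
        (((1 - H * A) * (1 - B * A) ^ M).mulVec (ψ θ')) = 0)
    (horthH : ∀ θ ∈ ΘH, ∀ θ' ∈ ΘH, θ ≠ θ' →
      star (((1 - H * A) * (1 - B * A) ^ M).mulVec (ψ θ)) ⬝ᵥ
        (((1 - H * A) * (1 - B * A) ^ M).mulVec (ψ θ')) = 0) :
    ∀ e : Fin N → ℂ,
      l2norm (((1 - H * A) * (1 - B * A) ^ M).mulVec e) ≤
        Real.sqrt (max (2 * μB ^ (2 * M) * C) (2 * (1 + εB) ^ (2 * M) * μH)) * l2norm e := by
  intro e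
  classical
  set E : Matrix (Fin N) (Fin N) ℂ := (1 - H * A) * (1 - B * A) ^ M with hE
  let Fq := WithLp.linearEquiv 2 ℂ (Fin N → ℂ)
  let T : EuclideanSpace ℂ (Fin N) →ₗ[ℂ] EuclideanSpace ℂ (Fin N) :=
    Fq.symm.toLinearMap ∘ₗ E.mulVecLin ∘ₗ Fq.toLinearMap
  have hT : ∀ x : Fin N → ℂ, T (toE x) = toE (E.mulVec x) := fun x => rfl
  have htoE : ∀ x : Fin N → ℂ, toE x = Fq.symm x := fun x => rfl
  -- unitarity
  have hQU : Qᴴ * Q = 1 := by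
    have h := (Matrix.mem_unitaryGroup_iff').mp hQ
    simpa [Matrix.star_eq_conjTranspose] using h
  -- eigenvectors of A
  have hxi : ∀ i, A.mulVec (fun k => Q k i) = lam i • (fun k => Q k i) := by
    intro i
    have h1 : Qᴴ.mulVec (fun k => Q k i) = Pi.single i 1 := by
      funext j
      have h0 : Qᴴ.mulVec (fun k => Q k i) j = (Qᴴ * Q) j i := by
        simp [Matrix.mulVec, Matrix.mul_apply, dotProduct]
      rw [h0, hQU]
      simp [Matrix.one_apply, Pi.single_apply]
    rw [hA, ← Matrix.mulVec_mulVec, ← Matrix.mulVec_mulVec, h1,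
      Matrix.diagonal_mulVec_single, Matrix.mulVec_single]
    funext k
    simp [mul_comm]
  -- (1 - H A) ξ_i = l i
  have hone : ∀ i, (1 - H * A).mulVec (fun k => Q k i) = l i := by
    intro i
    rw [Matrix.sub_mulVec, Matrix.one_mulVec, hl i, ← Matrix.mulVec_mulVec, hxi i]
  -- (1 - H A) ψ θ = ∑_{i ∈ V θ} t θ i • l i
  have hpsi_sum : ∀ θ, (1 - H * A).mulVec (ψ θ) = ∑ i ∈ V θ, t θ i • l i := by
    intro θ
    have h1 : ψ θ = ∑ i, t θ i • (fun k => Q k i) := by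
      funext k
      simp [hψQ θ, Matrix.mulVec, dotProduct, Finset.sum_apply, mul_comm]
    calc (1 - H * A).mulVec (ψ θ)
        = ∑ i, t θ i • (1 - H * A).mulVec (fun k => Q k i) := by
          rw [h1]
          simp only [← Matrix.mulVecLin_apply, map_sum, _root_.map_smul]
      _ = ∑ i, t θ i • l i := by simp only [hone]
      _ = ∑ i ∈ V θ, t θ i • l i := by
          refine (Finset.sum_subset (Finset.subset_univ _) ?_).symm
          intro i _ hi
          simp [ht θ i hi]
  -- powers of the smoother
  have hpow : ∀ θ (m : ℕ), ((1 - B * A) ^ m).mulVec (ψ θ) = σ θ ^ m • ψ θ := by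
    intro θ m
    induction m with
    | zero => simp [Matrix.one_mulVec]
    | succ m ih =>
      rw [pow_succ, ← Matrix.mulVec_mulVec, hB θ, Matrix.mulVec_smul, ih,
        smul_smul, pow_succ, mul_comm]
  have hEpsi : ∀ θ, E.mulVec (ψ θ) = σ θ ^ M • ∑ i ∈ V θ, t θ i • l i := by
    intro θ
    rw [hE, ← Matrix.mulVec_mulVec, hpow θ M, Matrix.mulVec_smul, hpsi_sum θ]
  -- norm of t θ
  have ht_norm : ∀ θ, ∑ i ∈ V θ, ‖t θ i‖ ^ 2 = 1 := by
    intro θ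
    have h2 := h_on θ θ
    rw [if_pos rfl, hψQ θ, Matrix.star_mulVec, Matrix.dotProduct_mulVec,
      Matrix.vecMul_vecMul, hQU, Matrix.vecMul_one] at h2
    have h3 : ((∑ i, ‖t θ i‖ ^ 2 : ℝ) : ℂ) = star (t θ) ⬝ᵥ (t θ) := by
      rw [dotProduct]
      push_cast
      refine Finset.sum_congr rfl fun i _ => ?_
      rw [Pi.star_apply]
      exact (RCLike.conj_mul (t θ i)).symm
    have h4 : ((∑ i, ‖t θ i‖ ^ 2 : ℝ) : ℂ) = ((1 : ℝ) : ℂ) := by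
      rw [h3, h2]; norm_num
    have h5 : ∑ i, ‖t θ i‖ ^ 2 = 1 := by exact_mod_cast h4
    rw [← h5]
    refine Finset.sum_subset (Finset.subset_univ _) ?_
    intro i _ hi
    simp [ht θ i hi]
  -- key per-θ bound
  have key : ∀ θ (R : ℝ), 0 ≤ R → (∑ i ∈ V θ, (l2norm (l i)) ^ 2 ≤ R) →
      ‖T (toE (ψ θ))‖ ^ 2 ≤ ‖σ θ‖ ^ (2 * M) * R := by
    intro θ R hR hsum
    rw [hT, hEpsi θ]
    have hsmul : toE (σ θ ^ M • ∑ i ∈ V θ, t θ i • l i)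
        = σ θ ^ M • toE (∑ i ∈ V θ, t θ i • l i) := by
      rw [htoE, htoE, _root_.map_smul]
    rw [hsmul, norm_smul, norm_pow]
    have hsum2 : toE (∑ i ∈ V θ, t θ i • l i) = ∑ i ∈ V θ, t θ i • toE (l i) := by
      rw [htoE, map_sum]
      simp only [_root_.map_smul, htoE]
    have hb1 : ‖toE (∑ i ∈ V θ, t θ i • l i)‖ ≤ ∑ i ∈ V θ, ‖t θ i‖ * l2norm (l i) := by
      rw [hsum2]
      refine (norm_sum_le _ _).trans ?_
      refine Finset.sum_le_sum fun i _ => ?_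
      rw [norm_smul, toE_norm]
    have hb2 : (∑ i ∈ V θ, ‖t θ i‖ * l2norm (l i)) ^ 2 ≤
        (∑ i ∈ V θ, ‖t θ i‖ ^ 2) * (∑ i ∈ V θ, (l2norm (l i)) ^ 2) :=
      Finset.sum_mul_sq_le_sq_mul_sq _ _ _
    have hnn : (0:ℝ) ≤ ∑ i ∈ V θ, ‖t θ i‖ * l2norm (l i) := by
      refine Finset.sum_nonneg fun i _ => ?_
      have : 0 ≤ l2norm (l i) := Real.sqrt_nonneg _
      positivity
    have hb3 : ‖toE (∑ i ∈ V θ, t θ i • l i)‖ ^ 2 ≤ R := by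
      calc ‖toE (∑ i ∈ V θ, t θ i • l i)‖ ^ 2
          ≤ (∑ i ∈ V θ, ‖t θ i‖ * l2norm (l i)) ^ 2 :=
            pow_le_pow_left₀ (norm_nonneg _) hb1 2
        _ ≤ (∑ i ∈ V θ, ‖t θ i‖ ^ 2) * (∑ i ∈ V θ, (l2norm (l i)) ^ 2) := hb2
        _ = ∑ i ∈ V θ, (l2norm (l i)) ^ 2 := by rw [ht_norm θ, one_mul]
        _ ≤ R := hsum
    calc (‖σ θ‖ ^ M * ‖toE (∑ i ∈ V θ, t θ i • l i)‖) ^ 2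
        = ‖σ θ‖ ^ (2 * M) * ‖toE (∑ i ∈ V θ, t θ i • l i)‖ ^ 2 := by
          rw [mul_pow, ← pow_mul, mul_comm M 2]
      _ ≤ ‖σ θ‖ ^ (2 * M) * R := by
          exact mul_le_mul_of_nonneg_left hb3 (by positivity)
  -- bounds per group
  have keyB : ∀ θ ∈ ΘB, ‖T (toE (ψ θ))‖ ^ 2 ≤ μB ^ (2 * M) * C := by
    intro θ hθ
    refine (key θ C hC (hlB θ hθ)).trans ?_
    exact mul_le_mul_of_nonneg_right (pow_le_pow_left₀ (norm_nonneg _) (hσB θ hθ) _) hC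
  have keyH : ∀ θ ∈ ΘH, ‖T (toE (ψ θ))‖ ^ 2 ≤ (1 + εB) ^ (2 * M) * μH := by
    intro θ hθ
    refine (key θ μH hμH.le (hlH θ hθ)).trans ?_
    exact mul_le_mul_of_nonneg_right (pow_le_pow_left₀ (norm_nonneg _) (hσH θ hθ) _) hμH.le
  -- orthonormal basis
  have hNE : Nonempty Θ := Fintype.card_pos_iff.mp (by rw [hcard]; omega)
  have hon : Orthonormal ℂ (fun θ => toE (ψ θ)) := by
    rw [orthonormal_iff_ite]
    intro a b
    rw [toE_inner, h_on a b]
  have hcard' : Fintype.card Θ = Module.finrank ℂ (EuclideanSpace ℂ (Fin N)) := by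
    rw [hcard, finrank_euclideanSpace_fin]
  have hspan : ⊤ ≤ Submodule.span ℂ (Set.range fun θ => toE (ψ θ)) :=
    (hon.linearIndependent.span_eq_top_of_card_eq_finrank hcard').ge
  let b : OrthonormalBasis Θ ℂ (EuclideanSpace ℂ (Fin N)) := OrthonormalBasis.mk hon hspan
  set c : Θ → ℂ := fun θ => b.repr (toE e) θ with hc
  have hdecomp : toE e = ∑ θ, c θ • toE (ψ θ) := by
    conv_lhs => rw [← b.sum_repr (toE e)]
    refine Finset.sum_congr rfl fun θ _ => ?_
    congr 1
    show b θ = toE (ψ θ)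
    rw [show ⇑b = fun θ => toE (ψ θ) from OrthonormalBasis.coe_mk hon hspan]
  have hpars : ∑ θ, ‖c θ‖ ^ 2 = ‖toE e‖ ^ 2 := by
    have h1 : ‖b.repr (toE e)‖ = ‖toE e‖ := b.repr.norm_map _
    rw [← h1, EuclideanSpace.norm_eq, Real.sq_sqrt (by positivity)]
  -- image decomposition
  have hTe : T (toE e) = (∑ θ ∈ ΘB, c θ • T (toE (ψ θ))) + (∑ θ ∈ ΘH, c θ • T (toE (ψ θ))) := by
    rw [hdecomp, map_sum]
    simp only [_root_.map_smul]
    rw [← Finset.sum_union hdisj, hcover]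
  -- orthogonality of images
  have horth' : ∀ (s : Finset Θ),
      (∀ θ ∈ s, ∀ θ' ∈ s, θ ≠ θ' → star (E.mulVec (ψ θ)) ⬝ᵥ E.mulVec (ψ θ') = 0) →
      ∀ θ ∈ s, ∀ θ' ∈ s, θ ≠ θ' →
        (inner ℂ (c θ • T (toE (ψ θ))) (c θ' • T (toE (ψ θ'))) : ℂ) = 0 := by
    intro s hs θ hθ θ' hθ' hne
    rw [inner_smul_left, inner_smul_right, hT, hT, toE_inner, hs θ hθ θ' hθ' hne]
    ring
  -- group bounds
  have hgroup : ∀ (s : Finset Θ) (K0 : ℝ), 0 ≤ K0 →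
      (∀ θ ∈ s, ∀ θ' ∈ s, θ ≠ θ' → star (E.mulVec (ψ θ)) ⬝ᵥ E.mulVec (ψ θ') = 0) →
      (∀ θ ∈ s, ‖T (toE (ψ θ))‖ ^ 2 ≤ K0) →
      ‖∑ θ ∈ s, c θ • T (toE (ψ θ))‖ ^ 2 ≤ K0 * ∑ θ ∈ s, ‖c θ‖ ^ 2 := by
    intro s K0 hK0 hsorth hbd
    rw [norm_sq_sum_orth s _ (horth' s hsorth)]
    calc ∑ θ ∈ s, ‖c θ • T (toE (ψ θ))‖ ^ 2
        = ∑ θ ∈ s, ‖c θ‖ ^ 2 * ‖T (toE (ψ θ))‖ ^ 2 := by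
          refine Finset.sum_congr rfl fun θ _ => ?_
          rw [norm_smul, mul_pow]
      _ ≤ ∑ θ ∈ s, ‖c θ‖ ^ 2 * K0 :=
          Finset.sum_le_sum fun θ hθ =>
            mul_le_mul_of_nonneg_left (hbd θ hθ) (by positivity)
      _ = K0 * ∑ θ ∈ s, ‖c θ‖ ^ 2 := by rw [← Finset.sum_mul, mul_comm]
  have hB2 := hgroup ΘB (μB ^ (2 * M) * C) (by positivity) horthB keyB
  have hH2 := hgroup ΘH ((1 + εB) ^ (2 * M) * μH) (by positivity) horthH keyH
  -- combine
  set K : ℝ := max (2 * μB ^ (2 * M) * C) (2 * (1 + εB) ^ (2 * M) * μH) with hKdef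
  have hK0 : 0 ≤ K := le_max_of_le_left (by positivity)
  have hKB : 2 * (μB ^ (2 * M) * C) ≤ K := by
    refine le_max_of_le_left ?_
    rw [← mul_assoc]
  have hKH : 2 * ((1 + εB) ^ (2 * M) * μH) ≤ K := by
    refine le_max_of_le_right ?_
    rw [← mul_assoc]
  have hSB : (0:ℝ) ≤ ∑ θ ∈ ΘB, ‖c θ‖ ^ 2 := Finset.sum_nonneg fun θ _ => by positivity
  have hSH : (0:ℝ) ≤ ∑ θ ∈ ΘH, ‖c θ‖ ^ 2 := Finset.sum_nonneg fun θ _ => by positivity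
  have hsplit : (∑ θ ∈ ΘB, ‖c θ‖ ^ 2) + (∑ θ ∈ ΘH, ‖c θ‖ ^ 2) = ‖toE e‖ ^ 2 := by
    rw [← Finset.sum_union hdisj, hcover, hpars]
  have hfin : ‖T (toE e)‖ ^ 2 ≤ K * ‖toE e‖ ^ 2 := by
    rw [hTe]
    set sB := ∑ θ ∈ ΘB, c θ • T (toE (ψ θ)) with hsB
    set sH := ∑ θ ∈ ΘH, c θ • T (toE (ψ θ)) with hsH
    have h1 : ‖sB + sH‖ ^ 2 ≤ 2 * ‖sB‖ ^ 2 + 2 * ‖sH‖ ^ 2 := by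
      have h0 : ‖sB + sH‖ ^ 2 ≤ (‖sB‖ + ‖sH‖) ^ 2 :=
        pow_le_pow_left₀ (norm_nonneg _) (norm_add_le _ _) 2
      nlinarith [sq_nonneg (‖sB‖ - ‖sH‖)]
    calc ‖sB + sH‖ ^ 2 ≤ 2 * ‖sB‖ ^ 2 + 2 * ‖sH‖ ^ 2 := h1
      _ ≤ 2 * ((μB ^ (2 * M) * C) * ∑ θ ∈ ΘB, ‖c θ‖ ^ 2)
          + 2 * (((1 + εB) ^ (2 * M) * μH) * ∑ θ ∈ ΘH, ‖c θ‖ ^ 2) := by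
          linarith [hB2, hH2]
      _ ≤ K * (∑ θ ∈ ΘB, ‖c θ‖ ^ 2) + K * (∑ θ ∈ ΘH, ‖c θ‖ ^ 2) := by
          refine add_le_add ?_ ?_
          · calc 2 * ((μB ^ (2 * M) * C) * ∑ θ ∈ ΘB, ‖c θ‖ ^ 2)
                = (2 * (μB ^ (2 * M) * C)) * ∑ θ ∈ ΘB, ‖c θ‖ ^ 2 := by ring
              _ ≤ K * ∑ θ ∈ ΘB, ‖c θ‖ ^ 2 := mul_le_mul_of_nonneg_right hKB hSB
          · calc 2 * (((1 + εB) ^ (2 * M) * μH) * ∑ θ ∈ ΘH, ‖c θ‖ ^ 2)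
                = (2 * ((1 + εB) ^ (2 * M) * μH)) * ∑ θ ∈ ΘH, ‖c θ‖ ^ 2 := by ring
              _ ≤ K * ∑ θ ∈ ΘH, ‖c θ‖ ^ 2 := mul_le_mul_of_nonneg_right hKH hSH
      _ = K * ‖toE e‖ ^ 2 := by rw [← hsplit]; ring
  have hsqrt := Real.sqrt_le_sqrt hfin
  rw [Real.sqrt_sq (norm_nonneg _), Real.sqrt_mul hK0, Real.sqrt_sq (norm_nonneg _)] at hsqrt
  calc l2norm (E.mulVec e) = ‖T (toE e)‖ := by rw [hT, toE_norm]
    _ ≤ Real.sqrt K * ‖toE e‖ := hsqrt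
    _ = Real.sqrt K * l2norm e := by rw [toE_norm]
end
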